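/- Let B : [0,1] → ℝ be continuous with B(0) = 0, let u, v be B-solutions with u(0) = 0, u(1) = 1, v(0) = 1, v(1) = 0, with nonzero constant Wronskian α, and let T be the associated Green operator. If e ∈ H1, β ∈ ℝ with β ≠ 0, and (Te)(x) = β·e(x) for all x ∈ [0,1], then for every h ∈ H1: E(e, h) = β^{-1}·∫_0^1 e(x)h(x) dx. That is, 1/β is an eigenvalue of the random Schrödinger operator L with eigenfunction e. -/

import Mathlib

open MeasureTheory intervalIntegral

/-- `u` is a pathwise (`B`-)solution of the homogeneous equation `-u'' + B'·u = 0`. -/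
def IsBSolution (B u u' : ℝ → ℝ) : Prop :=
  (∀ x ∈ Set.Icc (0:ℝ) 1, HasDerivWithinAt u (u' x) (Set.Icc 0 1) x) ∧
  ContinuousOn u' (Set.Icc 0 1) ∧
  ∀ x ∈ Set.Icc (0:ℝ) 1, u' x = u' 0 + u x * B x - ∫ y in (0:ℝ)..x, u' y * B y

/-- `h` belongs to `H1` with (a.e.) derivative `g`: `h` is absolutely continuous on
`[0,1]` with `h(0) = h(1) = 0`, i.e. `h(x) = ∫_0^x g` for an integrable `g` with
`∫_0^1 g = 0`. -/
def MemH1 (h g : ℝ → ℝ) : Prop :=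
  MeasureTheory.IntegrableOn g (Set.Icc 0 1) ∧
  (∫ t in (0:ℝ)..1, g t) = 0 ∧
  ∀ x ∈ Set.Icc (0:ℝ) 1, h x = ∫ t in (0:ℝ)..x, g t

/-- The pathwise bilinear form `E(f,h)`, the weak meaning of `⟨Lf, h⟩` for
`L = -d²/dx² + B'`; here `f'` and `h'` are the derivatives of `f` and `h`. -/
noncomputable def Eform (B f f' h h' : ℝ → ℝ) : ℝ :=
  (∫ x in (0:ℝ)..1, f' x * h' x) -
    ∫ x in (0:ℝ)..1, (f' x * h x + f x * h' x) * B x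

/-- The Green operator `T` built from the independent solutions `u`, `v` and the
Wronskian `α`: `(Tf)(x) = α⁻¹·(v(x)·∫_0^x u f + u(x)·∫_x^1 v f)`. -/
noncomputable def greenOp (α : ℝ) (u v f : ℝ → ℝ) (x : ℝ) : ℝ :=
  α⁻¹ * (v x * (∫ y in (0:ℝ)..x, u y * f y) + u x * (∫ y in x..(1:ℝ), v y * f y))

/-- The derivative of `Tf`:
`(Tf)'(x) = α⁻¹·(v'(x)·∫_0^x u f + u'(x)·∫_x^1 v f)`. -/
noncomputable def greenOpDeriv (α : ℝ) (u u' v v' f : ℝ → ℝ) (x : ℝ) : ℝ :=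
  α⁻¹ * (v' x * (∫ y in (0:ℝ)..x, u y * f y) + u' x * (∫ y in x..(1:ℝ), v y * f y))



section GreenAux

open Set

lemma primitive_hasDerivWithinAt {c : ℝ → ℝ} (hc : ContinuousOn c (Set.Icc 0 1))
    {x : ℝ} (hx : x ∈ Set.Icc (0:ℝ) 1) :
    HasDerivWithinAt (fun z => ∫ y in (0:ℝ)..z, c y) (c x) (Set.Icc 0 1) x := by
  haveI : Fact (x ∈ Set.Icc (0:ℝ) 1) := ⟨hx⟩
  have hsub : Set.uIcc (0:ℝ) x ⊆ Set.Icc 0 1 := by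
    rw [Set.uIcc_of_le hx.1]; exact Set.Icc_subset_Icc le_rfl hx.2
  exact intervalIntegral.integral_hasDerivWithinAt_right
    ((hc.mono hsub).intervalIntegrable)
    (hc.stronglyMeasurableAtFilter_nhdsWithin measurableSet_Icc x)
    (hc x hx)

lemma ae_zero_of_primitive_zero {k : ℝ → ℝ} (hk : IntegrableOn k (Set.Icc 0 1))
    (h0 : ∀ x ∈ Set.Icc (0:ℝ) 1, (∫ t in (0:ℝ)..x, k t) = 0) :
    ∀ᵐ x ∂(volume.restrict (Set.Ioc (0:ℝ) 1)), k x = 0 := by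
  set F : ℝ → ℝ := (Set.Ioc (0:ℝ) 1).indicator k with hF
  have hFi : Integrable F volume :=
    (hk.mono_set Set.Ioc_subset_Icc_self).integrable_indicator measurableSet_Ioc
  have hN : ∀ c : ℝ, (∫ t in (0:ℝ)..c, F t) = 0 := by
    intro c
    rcases le_or_gt 0 c with hc | hc
    · rw [intervalIntegral.integral_of_le hc, setIntegral_indicator measurableSet_Ioc]
      have : Set.Ioc 0 c ∩ Set.Ioc 0 1 = Set.Ioc 0 (min c 1) := by
        ext y; simp [Set.mem_Ioc, and_assoc, le_min_iff, and_comm]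
        tauto
      rw [this, ← intervalIntegral.integral_of_le (le_min hc zero_le_one)]
      exact h0 _ ⟨le_min hc zero_le_one, min_le_right _ _⟩
    · rw [intervalIntegral.integral_of_ge hc.le, setIntegral_indicator measurableSet_Ioc]
      have : Set.Ioc c 0 ∩ Set.Ioc 0 1 = ∅ := by
        ext y; simp only [Set.mem_inter_iff, Set.mem_Ioc, Set.mem_empty_iff_false, iff_false]
        rintro ⟨⟨_, h1⟩, ⟨h2, _⟩⟩; linarith
      rw [this]; simp
  have hInt : ∀ a b : ℝ, (∫ t in Set.Ioc a b, F t) = 0 := by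
    intro a b
    rcases le_or_gt a b with hab | hab
    · rw [← intervalIntegral.integral_of_le hab]
      have := intervalIntegral.integral_interval_sub_left
        (hFi.intervalIntegrable (a:=0) (b:=b)) (hFi.intervalIntegrable (a:=0) (b:=a))
      rw [← this, hN, hN, sub_zero]
    · rw [Set.Ioc_eq_empty (by exact not_lt.mpr hab.le)]; simp
  have hmain : ∀ᵐ x ∂(volume : Measure ℝ), F x = 0 := by
    filter_upwards [IsUnifLocDoublingMeasure.ae_tendsto_average
      (μ := (volume : Measure ℝ)) hFi.locallyIntegrable 1] with x hx
    have h1 : Filter.Tendsto (fun r : ℝ => ⨍ y in Metric.closedBall x r, F y)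
        (nhdsWithin 0 (Set.Ioi 0)) (nhds (F x)) := by
      refine hx (fun _ => x) id Filter.tendsto_id ?_
      filter_upwards [self_mem_nhdsWithin] with r hr
      exact Metric.mem_closedBall_self (by simp; exact le_of_lt hr)
    have h2 : Filter.Tendsto (fun r : ℝ => ⨍ y in Metric.closedBall x r, F y)
        (nhdsWithin 0 (Set.Ioi 0)) (nhds 0) := by
      refine Filter.Tendsto.congr' ?_ tendsto_const_nhds
      filter_upwards [self_mem_nhdsWithin] with r hr
      have : (∫ y in Metric.closedBall x r, F y) = 0 := by
        rw [Real.closedBall_eq_Icc, integral_Icc_eq_integral_Ioc, hInt]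
      rw [setAverage_eq, this, smul_zero]
    exact (tendsto_nhds_unique h2 h1).symm
  have hk_eq : k =ᵐ[volume.restrict (Set.Ioc (0:ℝ) 1)] F :=
    (indicator_ae_eq_restrict measurableSet_Ioc).symm
  filter_upwards [hk_eq, ae_restrict_of_ae hmain] with x h1 h2
  rw [h1, h2]

lemma icc_mem_nhdsWithin_Ici {y : ℝ} (hy : y ∈ Set.Ico (0:ℝ) 1) :
    Set.Icc (0:ℝ) 1 ∈ nhdsWithin y (Set.Ici y) := by
  refine Filter.mem_of_superset (Filter.inter_mem self_mem_nhdsWithin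
    (mem_nhdsWithin_of_mem_nhds (Iio_mem_nhds hy.2))) ?_
  rintro z ⟨hz1, hz2⟩
  exact ⟨hy.1.trans hz1, hz2.le⟩

lemma wronskian_const {B u u' v v' : ℝ → ℝ}
    (hB : ContinuousOn B (Set.Icc 0 1))
    (hu : IsBSolution B u u') (hv : IsBSolution B v v')
    {α : ℝ} (hαdef : α = u' 0 * v 0 - u 0 * v' 0) :
    ∀ x ∈ Set.Icc (0:ℝ) 1, u' x * v x - u x * v' x = α := by
  have hu'B : ContinuousOn (fun y => u' y * B y) (Set.Icc 0 1) := hu.2.1.mul hB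
  have hv'B : ContinuousOn (fun y => v' y * B y) (Set.Icc 0 1) := hv.2.1.mul hB
  set W : ℝ → ℝ := fun x => u' 0 * v x - u x * v' 0
      - v x * (∫ y in (0:ℝ)..x, u' y * B y) + u x * (∫ y in (0:ℝ)..x, v' y * B y) with hWdef
  have hWd : ∀ x ∈ Set.Icc (0:ℝ) 1, HasDerivWithinAt W 0 (Set.Icc 0 1) x := by
    intro x hx
    have hd : HasDerivWithinAt W
        (u' 0 * v' x - u' x * v' 0
          - (v' x * (∫ y in (0:ℝ)..x, u' y * B y) + v x * (u' x * B x))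
          + (u' x * (∫ y in (0:ℝ)..x, v' y * B y) + u x * (v' x * B x)))
        (Set.Icc 0 1) x := by
      exact ((((hv.1 x hx).const_mul (u' 0)).sub ((hu.1 x hx).mul_const (v' 0))).sub
        ((hv.1 x hx).mul (primitive_hasDerivWithinAt hu'B hx))).add
        ((hu.1 x hx).mul (primitive_hasDerivWithinAt hv'B hx))
    have heq : (u' 0 * v' x - u' x * v' 0
          - (v' x * (∫ y in (0:ℝ)..x, u' y * B y) + v x * (u' x * B x))
          + (u' x * (∫ y in (0:ℝ)..x, v' y * B y) + u x * (v' x * B x))) = 0 := by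
      have h1 := hu.2.2 x hx
      have h2 := hv.2.2 x hx
      linear_combination (-(v' x)) * h1 + (u' x) * h2
    rwa [heq] at hd
  have hWcont : ContinuousOn W (Set.Icc 0 1) := fun x hx => (hWd x hx).continuousWithinAt
  have hWconst : ∀ x ∈ Set.Icc (0:ℝ) 1, W x = W 0 := by
    refine constant_of_has_deriv_right_zero hWcont fun y hy => ?_
    exact (hWd y ⟨hy.1, hy.2.le⟩).mono_of_mem_nhdsWithin (icc_mem_nhdsWithin_Ici hy)
  intro x hx
  have h3 := hWconst x hx
  simp only [hWdef, intervalIntegral.integral_same, mul_zero, sub_zero, add_zero] at h3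
  have h1 := hu.2.2 x hx
  have h2 := hv.2.2 x hx
  rw [hαdef]
  linear_combination (v x) * h1 - (u x) * h2 + h3

lemma ibp_primitive {φ D g h : ℝ → ℝ}
    (hφ : ∀ x ∈ Set.Icc (0:ℝ) 1, HasDerivWithinAt φ (D x) (Set.Icc 0 1) x)
    (hD : ContinuousOn D (Set.Icc 0 1))
    (hg : IntegrableOn g (Set.Icc 0 1)) (hg0 : (∫ t in (0:ℝ)..1, g t) = 0)
    (hh : ∀ x ∈ Set.Icc (0:ℝ) 1, h x = ∫ t in (0:ℝ)..x, g t) :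
    (∫ x in (0:ℝ)..1, φ x * g x) = - ∫ x in (0:ℝ)..1, D x * h x := by
  have hgI : ∀ x ∈ Set.Icc (0:ℝ) 1, IntervalIntegrable g volume 0 x := by
    intro x hx
    exact (hg.mono_set (by rw [Set.uIcc_of_le hx.1]; exact Set.Icc_subset_Icc le_rfl hx.2)).intervalIntegrable
  -- clamp function
  set c : ℝ → ℝ := fun t => min 1 (max 0 t) with hc
  have hc_cont : Continuous c := continuous_const.min (continuous_const.max continuous_id)
  have hc_mem : ∀ t, c t ∈ Set.Icc (0:ℝ) 1 := fun t =>
    ⟨le_min zero_le_one (le_max_left 0 t), min_le_left _ _⟩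
  have hc_eq : ∀ t ∈ Set.Icc (0:ℝ) 1, c t = t := by
    intro t ht; simp only [hc]; rw [max_eq_right ht.1, min_eq_right ht.2]
  set Dc : ℝ → ℝ := fun t => D (c t) with hDc
  have hDc_cont : Continuous Dc := hD.comp_continuous hc_cont hc_mem
  have hDc_eq : ∀ t ∈ Set.Icc (0:ℝ) 1, Dc t = D t := by
    intro t ht; simp only [hDc]; rw [hc_eq t ht]
  -- bound
  obtain ⟨M, hM⟩ : ∃ M : ℝ, ∀ t : ℝ, |Dc t| ≤ M := by
    obtain ⟨M, hM⟩ := (isCompact_Icc (a := (0:ℝ)) (b := 1)).exists_bound_of_continuousOn hD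
    exact ⟨M, fun t => by simpa using hM (c t) (hc_mem t)⟩
  -- FTC
  have hφcont : ContinuousOn φ (Set.Icc 0 1) := fun x hx => (hφ x hx).continuousWithinAt
  have hFTC : ∀ x ∈ Set.Icc (0:ℝ) 1, (∫ t in (0:ℝ)..x, D t) = φ x - φ 0 := by
    intro x hx
    have hsub : Set.Icc (0:ℝ) x ⊆ Set.Icc 0 1 := Set.Icc_subset_Icc le_rfl hx.2
    refine intervalIntegral.integral_eq_sub_of_hasDeriv_right_of_le hx.1
      (hφcont.mono hsub) (fun y hy => ?_) ?_
    · have hyI : y ∈ Set.Icc (0:ℝ) 1 := ⟨hy.1.le, hy.2.le.trans hx.2⟩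
      have : HasDerivAt φ (D y) y := by
        refine (hφ y hyI).hasDerivAt ?_
        exact Icc_mem_nhds hy.1 (lt_of_lt_of_le hy.2 hx.2)
      exact this.hasDerivWithinAt
    · exact (hD.mono (by rw [Set.uIcc_of_le hx.1]; exact hsub)).intervalIntegrable
  -- measure
  set μ : Measure ℝ := volume.restrict (Set.Ioc 0 1) with hμ
  haveI : IsFiniteMeasure μ := by
    constructor; rw [hμ, Measure.restrict_apply_univ]; simp
  -- the kernel
  set F : ℝ × ℝ → ℝ := fun p => if p.1 ≤ p.2 then Dc p.1 * g p.2 else 0 with hFdef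
  have hg' : Integrable g μ := hg.mono_set Set.Ioc_subset_Icc_self
  have hFmeas : AEStronglyMeasurable F (μ.prod μ) := by
    have h1 : AEStronglyMeasurable (fun p : ℝ × ℝ => Dc p.1 * g p.2) (μ.prod μ) :=
      (hDc_cont.aestronglyMeasurable.comp_fst).mul hg'.aestronglyMeasurable.comp_snd
    have h2 : MeasurableSet {p : ℝ × ℝ | p.1 ≤ p.2} :=
      measurableSet_le measurable_fst measurable_snd
    have : F = Set.indicator {p : ℝ × ℝ | p.1 ≤ p.2} (fun p => Dc p.1 * g p.2) := by
      funext p; simp [hFdef, Set.indicator, Set.mem_setOf_eq]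
    rw [this]
    exact h1.indicator h2
  have hFint : Integrable F (μ.prod μ) := by
    refine Integrable.mono' ((integrable_const M).mul_prod hg'.norm) hFmeas ?_
    refine Filter.Eventually.of_forall fun p => ?_
    simp only [hFdef]
    split_ifs with hp
    · rw [Real.norm_eq_abs, abs_mul]
      exact mul_le_mul (hM p.1) le_rfl (abs_nonneg _) ((abs_nonneg _).trans (hM p.1))
    · simp only [norm_zero]
      have hM0 : (0:ℝ) ≤ M := (abs_nonneg _).trans (hM 0)
      positivity
  -- Fubini
  have hswap : (∫ t, (∫ x, F (t, x) ∂μ) ∂μ) = ∫ x, (∫ t, F (t, x) ∂μ) ∂μ :=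
    MeasureTheory.integral_integral_swap (f := fun t x => F (t, x)) hFint
  -- compute LHS of hswap
  have hL : (∫ t, (∫ x, F (t, x) ∂μ) ∂μ) = - ∫ x in (0:ℝ)..1, D x * h x := by
    have hinner : ∀ t ∈ Set.Ioc (0:ℝ) 1, (∫ x, F (t, x) ∂μ) = -(D t * h t) := by
      intro t ht
      have htI : t ∈ Set.Icc (0:ℝ) 1 := Set.Ioc_subset_Icc_self ht
      have h1 : (fun x => F (t, x)) = Set.indicator (Set.Ici t) (fun x => Dc t * g x) := by
        funext x; simp [hFdef, Set.indicator, Set.mem_Ici]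
      rw [h1, hμ, setIntegral_indicator measurableSet_Ici]
      have h2 : Set.Ioc (0:ℝ) 1 ∩ Set.Ici t = Set.Ioc t 1 ∪ {t} := by
        ext y
        simp only [Set.mem_inter_iff, Set.mem_Ioc, Set.mem_Ici, Set.mem_union,
          Set.mem_singleton_iff]
        constructor
        · rintro ⟨⟨h1', h2'⟩, h3'⟩
          rcases eq_or_lt_of_le h3' with hh' | hh'
          · right; exact hh'.symm
          · left; exact ⟨hh', h2'⟩
        · rintro (⟨h1', h2'⟩ | rfl)
          · exact ⟨⟨ht.1.trans h1', h2'⟩, h1'.le⟩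
          · exact ⟨⟨ht.1, ht.2⟩, le_rfl⟩
      have h2' : (Set.Ioc (0:ℝ) 1 ∩ Set.Ici t : Set ℝ) =ᵐ[volume] (Set.Ioc t 1 : Set ℝ) := by
        rw [h2]
        exact union_ae_eq_left_of_ae_eq_empty (by simp [ae_eq_empty])
      rw [setIntegral_congr_set h2', MeasureTheory.integral_const_mul, ← intervalIntegral.integral_of_le ht.2]
      have h4 : (∫ x in t..1, g x) = -(h t) := by
        have h5 := intervalIntegral.integral_interval_sub_left
          (hgI 1 (by norm_num)) (hgI t htI)
        rw [← h5, hg0, hh t htI]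
        ring
      rw [h4, hDc_eq t htI]
      ring
    calc (∫ t, (∫ x, F (t, x) ∂μ) ∂μ) = ∫ t in Set.Ioc (0:ℝ) 1, -(D t * h t) := by
          rw [hμ]
          exact setIntegral_congr_fun measurableSet_Ioc (fun t ht => hinner t ht)
      _ = - ∫ x in (0:ℝ)..1, D x * h x := by
          rw [← intervalIntegral.integral_of_le zero_le_one, ← intervalIntegral.integral_neg]
  -- compute RHS of hswap
  have hR : (∫ x, (∫ t, F (t, x) ∂μ) ∂μ) = ∫ x in (0:ℝ)..1, φ x * g x := by
    have hinner : ∀ x ∈ Set.Ioc (0:ℝ) 1, (∫ t, F (t, x) ∂μ) = (φ x - φ 0) * g x := by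
      intro x hx
      have hxI : x ∈ Set.Icc (0:ℝ) 1 := Set.Ioc_subset_Icc_self hx
      have h1 : (fun t => F (t, x)) = Set.indicator (Set.Iic x) (fun t => Dc t * g x) := by
        funext t; simp [hFdef, Set.indicator, Set.mem_Iic]
      rw [h1, hμ, setIntegral_indicator measurableSet_Iic]
      have h2 : Set.Ioc (0:ℝ) 1 ∩ Set.Iic x = Set.Ioc 0 x := by
        ext y
        simp only [Set.mem_inter_iff, Set.mem_Ioc, Set.mem_Iic]
        constructor
        · rintro ⟨⟨a, _⟩, b⟩; exact ⟨a, b⟩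
        · rintro ⟨a, b⟩; exact ⟨⟨a, b.trans hx.2⟩, b⟩
      rw [h2, MeasureTheory.integral_mul_const, ← intervalIntegral.integral_of_le hx.1.le]
      have h3 : (∫ t in (0:ℝ)..x, Dc t) = ∫ t in (0:ℝ)..x, D t := by
        refine intervalIntegral.integral_congr fun t ht => ?_
        rw [Set.uIcc_of_le hx.1.le] at ht
        exact hDc_eq t ⟨ht.1, ht.2.trans hx.2⟩
      rw [h3, hFTC x hxI]
    calc (∫ x, (∫ t, F (t, x) ∂μ) ∂μ) = ∫ x in Set.Ioc (0:ℝ) 1, (φ x - φ 0) * g x := by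
          rw [hμ]
          exact setIntegral_congr_fun measurableSet_Ioc (fun x hx => hinner x hx)
      _ = ∫ x in (0:ℝ)..1, (φ x - φ 0) * g x := by
          rw [← intervalIntegral.integral_of_le zero_le_one]
      _ = (∫ x in (0:ℝ)..1, φ x * g x) - φ 0 * ∫ x in (0:ℝ)..1, g x := by
          rw [← intervalIntegral.integral_const_mul, ← intervalIntegral.integral_sub]
          · exact intervalIntegral.integral_congr fun x _ => by ring
          · refine (hgI 1 (by norm_num)).continuousOn_mul ?_
            rw [Set.uIcc_of_le zero_le_one]; exact hφcont
          · exact ((hgI 1 (by norm_num)).const_mul _)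
      _ = ∫ x in (0:ℝ)..1, φ x * g x := by rw [hg0, mul_zero, sub_zero]
  rw [← hR, ← hswap, hL]

lemma cont_int {c : ℝ → ℝ} (hc : ContinuousOn c (Set.Icc 0 1)) {x : ℝ}
    (hx : x ∈ Set.Icc (0:ℝ) 1) : IntervalIntegrable c volume 0 x :=
  (hc.mono (by rw [Set.uIcc_of_le hx.1]; exact Set.Icc_subset_Icc le_rfl hx.2)).intervalIntegrable

lemma primitive_hasDerivWithinAt_left {c : ℝ → ℝ} (hc : ContinuousOn c (Set.Icc 0 1))
    {x : ℝ} (hx : x ∈ Set.Icc (0:ℝ) 1) :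
    HasDerivWithinAt (fun z => ∫ y in z..(1:ℝ), c y) (-(c x)) (Set.Icc 0 1) x := by
  have h1 : ∀ z ∈ Set.Icc (0:ℝ) 1,
      (∫ y in z..(1:ℝ), c y) = (∫ y in (0:ℝ)..1, c y) - ∫ y in (0:ℝ)..z, c y := by
    intro z hz
    exact (intervalIntegral.integral_interval_sub_left
      (cont_int hc (by norm_num)) (cont_int hc hz)).symm
  exact (HasDerivWithinAt.const_sub _ (primitive_hasDerivWithinAt hc hx)).congr h1 (h1 x hx)

lemma greenOp_hasDeriv {B u u' v v' f : ℝ → ℝ}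
    (hu : IsBSolution B u u') (hv : IsBSolution B v v')
    (hf : ContinuousOn f (Set.Icc 0 1)) (α : ℝ) :
    ∀ x ∈ Set.Icc (0:ℝ) 1, HasDerivWithinAt (greenOp α u v f)
      (greenOpDeriv α u u' v v' f x) (Set.Icc 0 1) x := by
  intro x hx
  have hu_c : ContinuousOn u (Set.Icc 0 1) := fun y hy => (hu.1 y hy).continuousWithinAt
  have hv_c : ContinuousOn v (Set.Icc 0 1) := fun y hy => (hv.1 y hy).continuousWithinAt
  have hd := (((hv.1 x hx).mul (primitive_hasDerivWithinAt (hu_c.mul hf) hx)).add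
    ((hu.1 x hx).mul (primitive_hasDerivWithinAt_left (hv_c.mul hf) hx))).const_mul α⁻¹
  have : greenOp α u v f = fun z => α⁻¹ *
      (v z * (∫ y in (0:ℝ)..z, u y * f y) + u z * (∫ y in z..(1:ℝ), v y * f y)) := rfl
  rw [this]
  refine hd.congr_deriv (Eq.symm ?_)
  simp only [greenOpDeriv, Pi.mul_apply]
  ring

lemma greenOpDeriv_continuousOn {B u u' v v' f : ℝ → ℝ}
    (hu : IsBSolution B u u') (hv : IsBSolution B v v')
    (hf : ContinuousOn f (Set.Icc 0 1)) (α : ℝ) :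
    ContinuousOn (greenOpDeriv α u u' v v' f) (Set.Icc 0 1) := by
  have hu_c : ContinuousOn u (Set.Icc 0 1) := fun y hy => (hu.1 y hy).continuousWithinAt
  have hv_c : ContinuousOn v (Set.Icc 0 1) := fun y hy => (hv.1 y hy).continuousWithinAt
  have hP_c : ContinuousOn (fun z => ∫ y in (0:ℝ)..z, u y * f y) (Set.Icc 0 1) :=
    fun x hx => (primitive_hasDerivWithinAt (hu_c.mul hf) hx).continuousWithinAt
  have hQ_c : ContinuousOn (fun z => ∫ y in z..(1:ℝ), v y * f y) (Set.Icc 0 1) :=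
    fun x hx => (primitive_hasDerivWithinAt_left (hv_c.mul hf) hx).continuousWithinAt
  have : greenOpDeriv α u u' v v' f = fun z => α⁻¹ *
      (v' z * (∫ y in (0:ℝ)..z, u y * f y) + u' z * (∫ y in z..(1:ℝ), v y * f y)) := rfl
  rw [this]
  exact continuousOn_const.mul ((hv.2.1.mul hP_c).add (hu.2.1.mul hQ_c))

lemma cont_int' {g : ℝ → ℝ} (hg : IntegrableOn g (Set.Icc 0 1)) :
    IntervalIntegrable g volume 0 1 :=
  (hg.mono_set (by rw [Set.uIcc_of_le zero_le_one])).intervalIntegrable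

lemma green_identity {B u u' v v' f g h : ℝ → ℝ}
    (hB : ContinuousOn B (Set.Icc 0 1))
    (hu : IsBSolution B u u') (hv : IsBSolution B v v')
    {α : ℝ} (hαdef : α = u' 0 * v 0 - u 0 * v' 0) (hα : α ≠ 0)
    (hf : ContinuousOn f (Set.Icc 0 1))
    (hg : IntegrableOn g (Set.Icc 0 1)) (hg0 : (∫ t in (0:ℝ)..1, g t) = 0)
    (hh : ∀ x ∈ Set.Icc (0:ℝ) 1, h x = ∫ t in (0:ℝ)..x, g t) :
    (∫ x in (0:ℝ)..1, greenOpDeriv α u u' v v' f x * g x)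
      - (∫ x in (0:ℝ)..1, (greenOpDeriv α u u' v v' f x * h x
          + greenOp α u v f x * g x) * B x)
    = ∫ x in (0:ℝ)..1, f x * h x := by
  have h01 : (1:ℝ) ∈ Set.Icc (0:ℝ) 1 := by norm_num
  have hu_c : ContinuousOn u (Set.Icc 0 1) := fun y hy => (hu.1 y hy).continuousWithinAt
  have hv_c : ContinuousOn v (Set.Icc 0 1) := fun y hy => (hv.1 y hy).continuousWithinAt
  have hWr := wronskian_const hB hu hv hαdef
  have hW'_c := greenOpDeriv_continuousOn hu hv hf α
  have hW_c : ContinuousOn (greenOp α u v f) (Set.Icc 0 1) :=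
    fun y hy => (greenOp_hasDeriv hu hv hf α y hy).continuousWithinAt
  have hh_c : ContinuousOn h (Set.Icc 0 1) := by
    have := intervalIntegral.continuousOn_primitive_interval (a := (0:ℝ)) (b := 1)
      (μ := volume) (f := g) (by rw [Set.uIcc_of_le zero_le_one]; exact hg)
    rw [Set.uIcc_of_le zero_le_one] at this
    exact this.congr hh
  -- the functions Φ, Ψ and their properties
  have hΦd : ∀ x ∈ Set.Icc (0:ℝ) 1, HasDerivWithinAt
      (fun z => v' 0 - ∫ y in (0:ℝ)..z, v' y * B y) (-(v' x * B x)) (Set.Icc 0 1) x :=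
    fun x hx => HasDerivWithinAt.const_sub _ (primitive_hasDerivWithinAt (hv.2.1.mul hB) hx)
  have hΨd : ∀ x ∈ Set.Icc (0:ℝ) 1, HasDerivWithinAt
      (fun z => u' 0 - ∫ y in (0:ℝ)..z, u' y * B y) (-(u' x * B x)) (Set.Icc 0 1) x :=
    fun x hx => HasDerivWithinAt.const_sub _ (primitive_hasDerivWithinAt (hu.2.1.mul hB) hx)
  have hΦv : ∀ x ∈ Set.Icc (0:ℝ) 1,
      v' 0 - (∫ y in (0:ℝ)..x, v' y * B y) = v' x - v x * B x := by
    intro x hx; have := hv.2.2 x hx; linarith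
  have hΨv : ∀ x ∈ Set.Icc (0:ℝ) 1,
      u' 0 - (∫ y in (0:ℝ)..x, u' y * B y) = u' x - u x * B x := by
    intro x hx; have := hu.2.2 x hx; linarith
  -- P and Q derivatives
  have hPd : ∀ x ∈ Set.Icc (0:ℝ) 1, HasDerivWithinAt
      (fun z => ∫ y in (0:ℝ)..z, u y * f y) (u x * f x) (Set.Icc 0 1) x :=
    fun x hx => primitive_hasDerivWithinAt (hu_c.mul hf) hx
  have hQd : ∀ x ∈ Set.Icc (0:ℝ) 1, HasDerivWithinAt
      (fun z => ∫ y in z..(1:ℝ), v y * f y) (-(v x * f x)) (Set.Icc 0 1) x :=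
    fun x hx => primitive_hasDerivWithinAt_left (hv_c.mul hf) hx
  -- C function
  set Cf : ℝ → ℝ := fun z => α⁻¹ *
      ((v' 0 - ∫ y in (0:ℝ)..z, v' y * B y) * (∫ y in (0:ℝ)..z, u y * f y)
        + (u' 0 - ∫ y in (0:ℝ)..z, u' y * B y) * (∫ y in z..(1:ℝ), v y * f y)) with hCfdef
  have hCfd : ∀ x ∈ Set.Icc (0:ℝ) 1, HasDerivWithinAt Cf
      (-(B x * greenOpDeriv α u u' v v' f x + f x)) (Set.Icc 0 1) x := by
    intro x hx
    have hd := (((hΦd x hx).mul (hPd x hx)).add ((hΨd x hx).mul (hQd x hx))).const_mul α⁻¹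
    refine hd.congr_deriv (Eq.symm ?_)
    rw [hΦv x hx, hΨv x hx]
    simp only [greenOpDeriv]
    have hinv : α * α⁻¹ = 1 := mul_inv_cancel₀ hα
    linear_combination (α⁻¹ * f x) * hWr x hx + (f x) * hinv
  have hCf_c : ContinuousOn Cf (Set.Icc 0 1) := fun y hy => (hCfd y hy).continuousWithinAt
  have hCfv : ∀ x ∈ Set.Icc (0:ℝ) 1,
      Cf x = greenOpDeriv α u u' v v' f x - greenOp α u v f x * B x := by
    intro x hx
    simp only [hCfdef]
    rw [hΦv x hx, hΨv x hx]
    simp only [greenOp, greenOpDeriv]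
    ring
  -- integrability helpers
  have hgInt : IntervalIntegrable g volume 0 1 := cont_int' hg
  have uIcc01 : Set.uIcc (0:ℝ) 1 = Set.Icc 0 1 := Set.uIcc_of_le zero_le_one
  have hCfg : IntervalIntegrable (fun x => Cf x * g x) volume 0 1 :=
    hgInt.continuousOn_mul (by rw [uIcc01]; exact hCf_c)
  have hWBg : IntervalIntegrable (fun x => (greenOp α u v f x * B x) * g x) volume 0 1 :=
    hgInt.continuousOn_mul (by rw [uIcc01]; exact hW_c.mul hB)
  have hW'hB : IntervalIntegrable (fun x => (greenOpDeriv α u u' v v' f x * h x) * B x)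
      volume 0 1 := by
    apply ContinuousOn.intervalIntegrable
    rw [uIcc01]; exact (hW'_c.mul hh_c).mul hB
  have hfh : IntervalIntegrable (fun x => f x * h x) volume 0 1 := by
    apply ContinuousOn.intervalIntegrable
    rw [uIcc01]; exact hf.mul hh_c
  -- step 1 : split ∫ W' g
  have eq1 : (∫ x in (0:ℝ)..1, greenOpDeriv α u u' v v' f x * g x)
      = (∫ x in (0:ℝ)..1, Cf x * g x)
        + ∫ x in (0:ℝ)..1, (greenOp α u v f x * B x) * g x := by
    rw [← intervalIntegral.integral_add hCfg hWBg]
    refine intervalIntegral.integral_congr fun x hx => ?_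
    rw [uIcc01] at hx
    rw [hCfv x hx]; ring
  -- step 2 : integration by parts
  have eq2 : (∫ x in (0:ℝ)..1, Cf x * g x)
      = ∫ x in (0:ℝ)..1, (B x * greenOpDeriv α u u' v v' f x + f x) * h x := by
    rw [ibp_primitive hCfd (((hB.mul hW'_c).add hf).neg) hg hg0 hh]
    simp only [neg_mul]
    rw [intervalIntegral.integral_neg, neg_neg]
  -- step 3 : split the result
  have eq3 : (∫ x in (0:ℝ)..1, (B x * greenOpDeriv α u u' v v' f x + f x) * h x)
      = (∫ x in (0:ℝ)..1, (greenOpDeriv α u u' v v' f x * h x) * B x)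
        + ∫ x in (0:ℝ)..1, f x * h x := by
    rw [← intervalIntegral.integral_add hW'hB hfh]
    exact intervalIntegral.integral_congr fun x hx => by ring
  -- step 4 : split the B-term
  have eq4 : (∫ x in (0:ℝ)..1, (greenOpDeriv α u u' v v' f x * h x
        + greenOp α u v f x * g x) * B x)
      = (∫ x in (0:ℝ)..1, (greenOpDeriv α u u' v v' f x * h x) * B x)
        + ∫ x in (0:ℝ)..1, (greenOp α u v f x * B x) * g x := by
    rw [← intervalIntegral.integral_add hW'hB hWBg]
    exact intervalIntegral.integral_congr fun x hx => by ring
  rw [eq1, eq2, eq3, eq4]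
  ring

end GreenAux

/-- If `e ∈ H1` is an eigenfunction of the Green operator `T` with eigenvalue `β ≠ 0`,
then `1/β` is an eigenvalue of `L`: `E(e,h) = β⁻¹·∫_0^1 e h` for all `h ∈ H1`. -/
theorem green_eigen_transfer (B u u' v v' : ℝ → ℝ)
    (hB : ContinuousOn B (Set.Icc 0 1)) (hB0 : B 0 = 0)
    (hu : IsBSolution B u u') (hv : IsBSolution B v v')
    (hu0 : u 0 = 0) (hu1 : u 1 = 1) (hv0 : v 0 = 1) (hv1 : v 1 = 0)
    (α : ℝ) (hαdef : α = u' 0 * v 0 - u 0 * v' 0) (hα : α ≠ 0)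
    (e ge : ℝ → ℝ) (he : MemH1 e ge)
    (β : ℝ) (hβ : β ≠ 0)
    (heig : ∀ x ∈ Set.Icc (0:ℝ) 1, greenOp α u v e x = β * e x) :
    ∀ h g : ℝ → ℝ, MemH1 h g →
      Eform B e ge h g = β⁻¹ * ∫ x in (0:ℝ)..1, e x * h x := by
  intro h g hmem
  obtain ⟨hgint, hg0, hh⟩ := hmem
  obtain ⟨hgeint, hge0, hee⟩ := he
  have he_c : ContinuousOn e (Set.Icc 0 1) := by
    have := intervalIntegral.continuousOn_primitive_interval (a := (0:ℝ)) (b := 1)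
      (μ := volume) (f := ge) (by rw [Set.uIcc_of_le zero_le_one]; exact hgeint)
    rw [Set.uIcc_of_le zero_le_one] at this
    exact this.congr hee
  have hWd := greenOp_hasDeriv hu hv he_c α
  have hW'_c := greenOpDeriv_continuousOn hu hv he_c α
  have hW_c : ContinuousOn (greenOp α u v e) (Set.Icc 0 1) :=
    fun y hy => (hWd y hy).continuousWithinAt
  -- greenOp vanishes at 0
  have hW0 : greenOp α u v e 0 = 0 := by
    simp [greenOp, hu0, intervalIntegral.integral_same]
  -- greenOp is the primitive of greenOpDeriv
  have hWprim : ∀ x ∈ Set.Icc (0:ℝ) 1,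
      (∫ t in (0:ℝ)..x, greenOpDeriv α u u' v v' e t) = greenOp α u v e x := by
    intro x hx
    have hsub : Set.Icc (0:ℝ) x ⊆ Set.Icc 0 1 := Set.Icc_subset_Icc le_rfl hx.2
    have := intervalIntegral.integral_eq_sub_of_hasDeriv_right_of_le hx.1
      ((hW_c).mono hsub) (fun y hy => ?_) ((hW'_c.mono (by
        rw [Set.uIcc_of_le hx.1]; exact hsub)).intervalIntegrable)
    · rw [this, hW0, sub_zero]
    · have hyI : y ∈ Set.Icc (0:ℝ) 1 := ⟨hy.1.le, hy.2.le.trans hx.2⟩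
      exact ((hWd y hyI).hasDerivAt (Icc_mem_nhds hy.1 (lt_of_lt_of_le hy.2 hx.2))).hasDerivWithinAt
  -- pointwise eigen relation
  have hew : ∀ x ∈ Set.Icc (0:ℝ) 1, e x = β⁻¹ * greenOp α u v e x := by
    intro x hx
    rw [heig x hx, ← mul_assoc, inv_mul_cancel₀ hβ, one_mul]
  -- a.e. identification of ge
  have haes : ∀ᵐ x ∂(volume.restrict (Set.Ioc (0:ℝ) 1)),
      ge x = β⁻¹ * greenOpDeriv α u u' v v' e x := by
    have hk : ∀ x ∈ Set.Icc (0:ℝ) 1,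
        (∫ t in (0:ℝ)..x, (ge t - β⁻¹ * greenOpDeriv α u u' v v' e t)) = 0 := by
      intro x hx
      have h1 : IntervalIntegrable ge volume 0 x := by
        apply IntegrableOn.intervalIntegrable
        rw [Set.uIcc_of_le hx.1]
        exact hgeint.mono_set (Set.Icc_subset_Icc le_rfl hx.2)
      have h2 : IntervalIntegrable (fun t => β⁻¹ * greenOpDeriv α u u' v v' e t)
          volume 0 x := (cont_int hW'_c hx).const_mul β⁻¹
      rw [intervalIntegral.integral_sub h1 h2, intervalIntegral.integral_const_mul,
        hWprim x hx, ← hee x hx, ← hew x hx, sub_self]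
    have hki : IntegrableOn (fun t => ge t - β⁻¹ * greenOpDeriv α u u' v v' e t)
        (Set.Icc 0 1) := by
      exact hgeint.sub ((continuousOn_const.mul hW'_c).integrableOn_compact isCompact_Icc)
    have := ae_zero_of_primitive_zero hki hk
    filter_upwards [this] with x hx
    linarith
  -- now rewrite the two integrals in Eform
  have hmeas : ∀ᵐ x ∂(volume : Measure ℝ), x ∈ Set.Ioc (0:ℝ) 1 →
      ge x = β⁻¹ * greenOpDeriv α u u' v v' e x :=
    (ae_restrict_iff' measurableSet_Ioc).mp haes
  have hge1 : (∫ x in (0:ℝ)..1, ge x * g x)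
      = β⁻¹ * ∫ x in (0:ℝ)..1, greenOpDeriv α u u' v v' e x * g x := by
    rw [← intervalIntegral.integral_const_mul]
    refine intervalIntegral.integral_congr_ae ?_
    filter_upwards [hmeas] with x hx hx'
    rw [Set.uIoc_of_le zero_le_one] at hx'
    rw [hx hx']; ring
  have hge2 : (∫ x in (0:ℝ)..1, (ge x * h x + e x * g x) * B x)
      = β⁻¹ * ∫ x in (0:ℝ)..1, (greenOpDeriv α u u' v v' e x * h x
          + greenOp α u v e x * g x) * B x := by
    rw [← intervalIntegral.integral_const_mul]
    refine intervalIntegral.integral_congr_ae ?_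
    filter_upwards [hmeas] with x hx hx'
    rw [Set.uIoc_of_le zero_le_one] at hx'
    rw [hx hx', hew x (Set.Ioc_subset_Icc_self hx')]
    ring
  show (∫ x in (0:ℝ)..1, ge x * g x) - (∫ x in (0:ℝ)..1, (ge x * h x + e x * g x) * B x)
      = β⁻¹ * ∫ x in (0:ℝ)..1, e x * h x
  rw [hge1, hge2, ← mul_sub, green_identity hB hu hv hαdef hα he_c hgint hg0 hh]
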